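/- Let q and p be odd integers with 2 < p < q. Let c, c', s ∈ ℤⁿ be integer vectors such that c'[i] ≡ c[i] (mod 2) and |c'[i] − (p/q)·c[i]| ≤ 1 for every index i. If |[c·s]_q| < q/2 − (q/p)·‖s‖₁, then [c'·s]_p ≡ [c·s]_q (mod 2). (Here c·s denotes the dot product.) -/

import Mathlib

lemma bmod_eq_self_of_abs_lt {x : ℤ} {m : ℕ} (h : 2 * |x| < (m : ℤ)) :
    Int.bmod x m = x := by
  have hm : 0 < (m : ℤ) := by have := abs_nonneg x; omega
  rcases le_or_gt 0 x with hx | hx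
  · rw [abs_of_nonneg hx] at h
    have hxm : x % (m : ℤ) = x := Int.emod_eq_of_lt hx (by omega)
    rw [Int.bmod_pos x m (by rw [hxm]; omega), hxm]
  · rw [abs_of_neg hx] at h
    have hxm : x % (m : ℤ) = x + m := by
      have h1 : (x + (m : ℤ) * 1) % (m : ℤ) = x % m := Int.add_mul_emod_self_left x m 1
      rw [mul_one] at h1
      rw [← h1, Int.emod_eq_of_lt (by omega) (by omega)]
    rw [Int.bmod_neg x m (by rw [hxm]; omega), hxm]
    ring

/-- Modulus reduction preserves the message mod 2 (Lemma 5 of BGV, first part).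
`Int.bmod x q` is the representative of `x` modulo `q` in the symmetric
interval `[-q/2, q/2)`. -/
theorem modulus_reduction_parity (n p q : ℕ) (hp_odd : Odd p) (hq_odd : Odd q)
    (hp : 2 < p) (hpq : p < q)
    (c c' s : Fin n → ℤ)
    (hparity : ∀ i, c' i ≡ c i [ZMOD 2])
    (hclose : ∀ i, |(c' i : ℚ) - (p : ℚ) / (q : ℚ) * (c i : ℚ)| ≤ 1)
    (hnoise : ((|Int.bmod (∑ i, c i * s i) q| : ℤ) : ℚ) <
      (q : ℚ) / 2 - (q : ℚ) / (p : ℚ) * ∑ i, |(s i : ℚ)|) :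
    Int.bmod (∑ i, c' i * s i) p ≡ Int.bmod (∑ i, c i * s i) q [ZMOD 2] := by
  set u : ℤ := ∑ i, c i * s i with hu
  set v : ℤ := ∑ i, c' i * s i with hv
  set a : ℤ := Int.bmod u q with ha
  obtain ⟨k, hk⟩ : ∃ k : ℤ, a = u + q * k := by
    obtain ⟨k, hk⟩ := Int.dvd_bmod_sub_self (x := u) (m := q)
    exact ⟨k, by rw [ha]; omega⟩
  set b : ℤ := v + p * k with hb
  have hp0 : (0:ℚ) < (p:ℚ) := by exact_mod_cast (by omega : 0 < p)
  have hq0 : (0:ℚ) < (q:ℚ) := by exact_mod_cast (by omega : 0 < q)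
  have hp0' : (p:ℚ) ≠ 0 := ne_of_gt hp0
  have hq0' : (q:ℚ) ≠ 0 := ne_of_gt hq0
  set S : ℚ := ∑ i, |(s i : ℚ)| with hS
  -- the key algebraic identity
  have hsum : (v:ℚ) - (p:ℚ)/(q:ℚ) * (u:ℚ) =
      ∑ i, ((c' i:ℚ) - (p:ℚ)/(q:ℚ) * (c i:ℚ)) * (s i:ℚ) := by
    rw [hv, hu]
    push_cast
    rw [Finset.mul_sum, ← Finset.sum_sub_distrib]
    exact Finset.sum_congr rfl fun i _ => by ring
  have key : (b:ℚ) - (p:ℚ)/(q:ℚ) * (a:ℚ) = (v:ℚ) - (p:ℚ)/(q:ℚ) * (u:ℚ) := by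
    rw [hb, hk]
    push_cast
    field_simp
    ring
  have hbound : |(b:ℚ) - (p:ℚ)/(q:ℚ) * (a:ℚ)| ≤ S := by
    rw [key, hsum, hS]
    calc |∑ i, ((c' i:ℚ) - (p:ℚ)/(q:ℚ) * (c i:ℚ)) * (s i:ℚ)|
        ≤ ∑ i, |((c' i:ℚ) - (p:ℚ)/(q:ℚ) * (c i:ℚ)) * (s i:ℚ)| :=
          Finset.abs_sum_le_sum_abs _ _
      _ ≤ ∑ i, |(s i:ℚ)| := Finset.sum_le_sum fun i _ => by
          rw [abs_mul]
          calc |(c' i:ℚ) - (p:ℚ)/(q:ℚ) * (c i:ℚ)| * |(s i:ℚ)|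
              ≤ 1 * |(s i:ℚ)| :=
                mul_le_mul_of_nonneg_right (hclose i) (abs_nonneg _)
            _ = |(s i:ℚ)| := one_mul _
  -- the noise bound
  have hnoise' : |(a:ℚ)| < (q:ℚ)/2 - (q:ℚ)/(p:ℚ) * S := by
    have : ((|a| : ℤ) : ℚ) = |(a:ℚ)| := by push_cast; rfl
    rw [← this]; exact hnoise
  have h2 : (p:ℚ)/(q:ℚ) * |(a:ℚ)| < (p:ℚ)/2 - S := by
    have hpq0 : (0:ℚ) < (p:ℚ)/(q:ℚ) := by positivity
    have := mul_lt_mul_of_pos_left hnoise' hpq0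
    have heq : (p:ℚ)/(q:ℚ) * ((q:ℚ)/2 - (q:ℚ)/(p:ℚ) * S) = (p:ℚ)/2 - S := by
      field_simp
    linarith [heq ▸ this]
  have hbb : |(b:ℚ)| < (p:ℚ)/2 := by
    have habs : |(b:ℚ)| ≤ |(b:ℚ) - (p:ℚ)/(q:ℚ) * (a:ℚ)| + (p:ℚ)/(q:ℚ) * |(a:ℚ)| := by
      have h1 : |(p:ℚ)/(q:ℚ) * (a:ℚ)| = (p:ℚ)/(q:ℚ) * |(a:ℚ)| := by
        rw [abs_mul, abs_of_pos (by positivity)]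
      calc |(b:ℚ)| = |((b:ℚ) - (p:ℚ)/(q:ℚ) * (a:ℚ)) + (p:ℚ)/(q:ℚ) * (a:ℚ)| := by ring_nf
        _ ≤ |(b:ℚ) - (p:ℚ)/(q:ℚ) * (a:ℚ)| + |(p:ℚ)/(q:ℚ) * (a:ℚ)| := abs_add_le _ _
        _ = |(b:ℚ) - (p:ℚ)/(q:ℚ) * (a:ℚ)| + (p:ℚ)/(q:ℚ) * |(a:ℚ)| := by rw [h1]
    linarith
  have hbint : 2 * |b| < (p:ℤ) := by
    have : 2 * |(b:ℚ)| < (p:ℚ) := by linarith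
    exact_mod_cast (by push_cast; exact this : ((2 * |b| : ℤ) : ℚ) < ((p:ℤ):ℚ))
  have hvb : Int.bmod v p = b := by
    have hveq : v = b + (p:ℤ) * (-k) := by rw [hb]; ring
    rw [hveq, Int.add_mul_bmod_self_left, bmod_eq_self_of_abs_lt hbint]
  rw [hvb, Int.modEq_iff_dvd]
  have huv : (2:ℤ) ∣ u - v := by
    rw [hu, hv, ← Finset.sum_sub_distrib]
    apply Finset.dvd_sum
    intro i _
    have h2d : (2:ℤ) ∣ c i - c' i := Int.ModEq.dvd (hparity i)
    have : c i * s i - c' i * s i = (c i - c' i) * s i := (sub_mul _ _ _).symm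
    rw [this]
    exact h2d.mul_right _
  have hqp : (2:ℤ) ∣ (q:ℤ) - (p:ℤ) := by
    obtain ⟨mp, hmp⟩ := hp_odd
    obtain ⟨mq, hmq⟩ := hq_odd
    exact ⟨mq - mp, by push_cast [hmp, hmq]; ring⟩
  have hab : a - b = (u - v) + ((q:ℤ) - p) * k := by rw [hb, hk]; ring
  rw [hab]
  exact dvd_add huv (hqp.mul_right k)
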